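/- Let u : ℝ → ℝ be differentiable. Let φ₁, φ₂ ∈ ℝ and (ξ₂,ξ₄,ξ₆,ξ₇) ∈ ℝ⁴\{0}, set r = √(ξ₂²+ξ₄²+ξ₆²+ξ₇²), x = (cosφ₁cosφ₂, 0, cosφ₁sinφ₂, 0, sinφ₁, 0, 0) ∈ ℝ⁷, ξ = (0,ξ₂,0,ξ₄,0,ξ₆,ξ₇) ∈ ℝ⁷, and z = cosh(r)·x + i·(sinh(r)/r)·ξ ∈ ℂ⁷. Define μ_{ij}(z) = u′(‖z‖²)·((i·z) ∙ (ξ_{ij}·z)) and K(t) = u′(cosh(2t))·sinh(2t)/t. Then: μ₁₂(z) = −K(r)·cosφ₁cosφ₂·ξ₂; μ₃₄(z) = −K(r)·cosφ₁sinφ₂·ξ₄; μ₅₆(z) = −K(r)·sinφ₁·ξ₆; μ₅₇(z) = −K(r)·sinφ₁·ξ₇; and μ₆₇(z) = 0. -/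

import Mathlib

open Real Complex Matrix

noncomputable section

/-- The real inner product on `ℂ^m`:
`v ∙ w = ∑ⱼ (Re vⱼ)(Re wⱼ) + (Im vⱼ)(Im wⱼ)`. -/
noncomputable def dotR {m : ℕ} (v w : Fin m → ℂ) : ℝ :=
  ∑ j, ((v j).re * (w j).re + (v j).im * (w j).im)

/-- `ξ_{ij} = E_{ji} − E_{ij}`. -/
def xiMat {m : ℕ} (i j : Fin m) : Matrix (Fin m) (Fin m) ℝ :=
  Matrix.single j i 1 - Matrix.single i j 1

/-- `μ_{ij}(z) = u′(‖z‖²)·((i·z) ∙ (ξ_{ij}·z))`. -/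
noncomputable def muComp {m : ℕ} (u : ℝ → ℝ) (i j : Fin m) (z : Fin m → ℂ) : ℝ :=
  deriv u (dotR z z) *
    dotR (fun k => Complex.I * z k) (((xiMat i j).map (fun a => (a : ℂ))).mulVec z)

set_option maxHeartbeats 1000000 in
/-- Components of the moment map of the `SO(2)×SO(2)×SO(3)`-action on `T*S⁶`
at points of `Φ(L)`, `L = T^{*⊥}S² ⊂ T*S⁶`, with respect to the basis
`(ξ₁₂, ξ₃₄, ξ₅₆, ξ₅₇, ξ₆₇)` of the Lie algebra. -/
theorem stmt_6 (u : ℝ → ℝ) (hu : Differentiable ℝ u)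
    (φ₁ φ₂ ξ₂ ξ₄ ξ₆ ξ₇ : ℝ) (hξ : ¬(ξ₂ = 0 ∧ ξ₄ = 0 ∧ ξ₆ = 0 ∧ ξ₇ = 0))
    (r : ℝ) (hr : r = Real.sqrt (ξ₂ ^ 2 + ξ₄ ^ 2 + ξ₆ ^ 2 + ξ₇ ^ 2))
    (x ξ : Fin 7 → ℝ)
    (hx : x = ![Real.cos φ₁ * Real.cos φ₂, 0, Real.cos φ₁ * Real.sin φ₂, 0,
      Real.sin φ₁, 0, 0])
    (hξv : ξ = ![0, ξ₂, 0, ξ₄, 0, ξ₆, ξ₇])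
    (z : Fin 7 → ℂ)
    (hz : z = fun j => ((Real.cosh r * x j : ℝ) : ℂ) +
      Complex.I * ((Real.sinh r / r * ξ j : ℝ) : ℂ))
    (K : ℝ → ℝ) (hK : K = fun t => deriv u (Real.cosh (2 * t)) * Real.sinh (2 * t) / t) :
    muComp u 0 1 z = -K r * (Real.cos φ₁ * Real.cos φ₂) * ξ₂ ∧
    muComp u 2 3 z = -K r * (Real.cos φ₁ * Real.sin φ₂) * ξ₄ ∧
    muComp u 4 5 z = -K r * Real.sin φ₁ * ξ₆ ∧
    muComp u 4 6 z = -K r * Real.sin φ₁ * ξ₇ ∧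
    muComp u 5 6 z = 0 := by
  have hs : 0 < ξ₂ ^ 2 + ξ₄ ^ 2 + ξ₆ ^ 2 + ξ₇ ^ 2 := by
    by_contra h
    push_neg at h
    exact hξ ⟨by nlinarith [sq_nonneg ξ₂, sq_nonneg ξ₄, sq_nonneg ξ₆, sq_nonneg ξ₇],
      by nlinarith [sq_nonneg ξ₂, sq_nonneg ξ₄, sq_nonneg ξ₆, sq_nonneg ξ₇],
      by nlinarith [sq_nonneg ξ₂, sq_nonneg ξ₄, sq_nonneg ξ₆, sq_nonneg ξ₇],
      by nlinarith [sq_nonneg ξ₂, sq_nonneg ξ₄, sq_nonneg ξ₆, sq_nonneg ξ₇]⟩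
  have hr0 : 0 < r := by rw [hr]; exact Real.sqrt_pos.mpr hs
  have hr2 : r ^ 2 = ξ₂ ^ 2 + ξ₄ ^ 2 + ξ₆ ^ 2 + ξ₇ ^ 2 := by
    rw [hr, Real.sq_sqrt hs.le]
  have hne : r ≠ 0 := hr0.ne'
  have x0 : x 0 = Real.cos φ₁ * Real.cos φ₂ := by rw [hx]; rfl
  have x1 : x 1 = 0 := by rw [hx]; rfl
  have x2 : x 2 = Real.cos φ₁ * Real.sin φ₂ := by rw [hx]; rfl
  have x3 : x 3 = 0 := by rw [hx]; rfl
  have x4 : x 4 = Real.sin φ₁ := by rw [hx]; rfl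
  have x5 : x 5 = 0 := by rw [hx]; rfl
  have x6 : x 6 = 0 := by rw [hx]; rfl
  have p0 : ξ 0 = 0 := by rw [hξv]; rfl
  have p1 : ξ 1 = ξ₂ := by rw [hξv]; rfl
  have p2 : ξ 2 = 0 := by rw [hξv]; rfl
  have p3 : ξ 3 = ξ₄ := by rw [hξv]; rfl
  have p4 : ξ 4 = 0 := by rw [hξv]; rfl
  have p5 : ξ 5 = ξ₆ := by rw [hξv]; rfl
  have p6 : ξ 6 = ξ₇ := by rw [hξv]; rfl
  have hdz : dotR z z = Real.cosh (2 * r) := by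
    subst hz
    simp only [dotR, Fin.sum_univ_seven, Complex.add_re, Complex.add_im, Complex.mul_re,
      Complex.mul_im, Complex.I_re, Complex.I_im, Complex.ofReal_re, Complex.ofReal_im,
      x0, x1, x2, x3, x4, x5, x6, p0, p1, p2, p3, p4, p5, p6]
    have h1 := Real.sin_sq_add_cos_sq φ₁
    have h2 := Real.sin_sq_add_cos_sq φ₂
    have key := Real.cosh_two_mul r
    have hsq : (Real.sinh r / r) ^ 2 * (ξ₂ ^ 2 + ξ₄ ^ 2 + ξ₆ ^ 2 + ξ₇ ^ 2)
        = Real.sinh r ^ 2 := by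
      rw [← hr2]; field_simp
    linear_combination (Real.cosh r ^ 2 * Real.cos φ₁ ^ 2) * h2 +
      Real.cosh r ^ 2 * h1 + hsq - key
  subst hK
  refine ⟨?_, ?_, ?_, ?_, ?_⟩ <;>
  · rw [muComp, hdz]
    subst hz
    simp (config := { decide := true }) only [xiMat, Matrix.mulVec, dotProduct,
      Fin.sum_univ_seven, Matrix.single, Matrix.sub_apply, Matrix.map_apply,
      Matrix.of_apply, dotR, Complex.add_re, Complex.add_im, Complex.mul_re, Complex.mul_im,
      Complex.I_re, Complex.I_im, Complex.ofReal_re, Complex.ofReal_im,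
      Complex.ofReal_zero, Complex.ofReal_one, Complex.sub_re, Complex.sub_im,
      Complex.zero_re, Complex.zero_im, Complex.one_re, Complex.one_im,
      if_true, if_false, x0, x1, x2, x3, x4, x5, x6, p0, p1, p2, p3, p4, p5, p6,
      mul_zero, zero_mul, mul_one, one_mul, add_zero, zero_add, sub_zero, zero_sub,
      neg_zero, neg_neg, mul_neg, neg_mul]
    try (rw [Real.sinh_two_mul]; field_simp; ring)
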